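/- arXiv:1601.05123 — 2 statements merged into one kernel-verified Lean document; each statement's English description precedes it below -/
import Mathlib

section
/- There is an absolute constant C > 0 such that for every prime p and all integers K, L, M, N ≥ 1 for which the intervals I = [K+1, K+M] and J = [L+1, L+N] are contained in [1, p-1], one has |∑_{m∈I} ∑_{n∈J} K_p(mn, 1)| ≤ C ∑_{x=1}^{p-1} min{M, p/‖x‖_p} · min{N, p/‖x̄‖_p}. -/
/-- `e_p(z) = exp(2πiz/p)`. -/
noncomputable def ep (p : ℕ) (z : ℤ) : ℂ := Complex.exp (2 * Real.pi * Complex.I * z / p)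

/-- the multiplicative inverse of `x` modulo `p`, as a natural number -/
def pinv (p x : ℕ) : ℕ := ((x : ZMod p)⁻¹).val

/-- the Kloosterman sum `K_p(m,n) = ∑_{x=1}^{p-1} e_p(m x + n x̄)` -/
noncomputable def Kl (p : ℕ) (m n : ℤ) : ℂ :=
  ∑ x ∈ Finset.Icc 1 (p - 1), ep p (m * x + n * (pinv p x : ℤ))

/-- `‖u‖_p`: the distance from `u` to the nearest multiple of `p` -/
def dp (p : ℕ) (u : ℤ) : ℕ := min (u % p).toNat (p - (u % p).toNat)

open Finset Complex

lemma ep_add {p : ℕ} (hp : (p:ℂ) ≠ 0) (z w : ℤ) : ep p (z + w) = ep p z * ep p w := by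
  rw [ep, ep, ep, ← Complex.exp_add]
  congr 1
  push_cast
  field_simp

lemma ep_congr {p : ℕ} (hp : p ≠ 0) {z w : ℤ} (h : (z : ZMod p) = (w : ZMod p)) :
    ep p z = ep p w := by
  rw [ZMod.intCast_eq_intCast_iff, Int.ModEq] at h
  have hd : (p:ℤ) ∣ z - w := Int.ModEq.dvd h.symm
  obtain ⟨k, hk⟩ := hd
  have hz : z = w + p * k := by linarith
  have hpc : (p:ℂ) ≠ 0 := by exact_mod_cast Nat.cast_ne_zero.mpr hp
  have h1 : ep p z = ep p w * Complex.exp (k * (2 * Real.pi * Complex.I)) := by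
    rw [ep, ep, ← Complex.exp_add]
    congr 1
    rw [hz]
    push_cast
    field_simp
  rw [h1, Complex.exp_int_mul_two_pi_mul_I, mul_one]

lemma dp_of_lt {p y : ℕ} (hy : y < p) : dp p (y : ℤ) = min y (p - y) := by
  have : ((y:ℤ) % p) = y := Int.emod_eq_of_lt (by positivity) (by exact_mod_cast hy)
  simp [dp, this]

lemma norm_ep (p : ℕ) (z : ℤ) : ‖ep p z‖ = 1 := by
  have h : (2 * (Real.pi:ℂ) * Complex.I * z / p) = ((2 * Real.pi * z / p : ℝ) : ℂ) * Complex.I := by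
    push_cast; ring
  rw [ep, h, Complex.norm_exp_ofReal_mul_I]

lemma geom_bound {p : ℕ} (hp : p.Prime) {y : ℕ} (h1 : 1 ≤ y) (h2 : y ≤ p - 1) (K M : ℕ) :
    ‖∑ m ∈ Icc (K+1) (K+M), ep p ((m:ℤ) * y)‖ ≤ min (M:ℝ) ((p:ℝ) / (dp p (y:ℤ) : ℝ)) := by
  have hp0 : 0 < p := hp.pos
  have hp2 : 2 ≤ p := hp.two_le
  have hy : y < p := by omega
  set z : ℂ := ep p (y:ℤ) with hzdef
  have hzm : ∀ m : ℕ, ep p ((m:ℤ) * y) = z ^ m := by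
    intro m
    rw [hzdef, ep, ep, ← Complex.exp_nat_mul]
    congr 1
    push_cast; ring
  have hsum : ∑ m ∈ Icc (K+1) (K+M), ep p ((m:ℤ) * y)
      = z ^ (K+1) * ∑ i ∈ range M, z ^ i := by
    have : Icc (K+1) (K+M) = Ico (K+1) (K+M+1) := by
      rw [Finset.Ico_add_one_right_eq_Icc]
    rw [this]
    have hM : K + M + 1 - (K + 1) = M := by omega
    rw [Finset.sum_Ico_eq_sum_range, hM, Finset.mul_sum]
    refine Finset.sum_congr rfl fun i _ => ?_
    rw [hzm, ← pow_add]
  have hnz : ‖z‖ = 1 := norm_ep p y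
  rw [hsum, norm_mul, norm_pow, hnz, one_pow, one_mul]
  -- set d
  have hdp : dp p (y:ℤ) = min y (p - y) := dp_of_lt hy
  set d : ℕ := min y (p - y) with hddef
  have hd1 : 1 ≤ d := by omega
  have hd2 : 2 * d ≤ p := by omega
  rw [hdp]
  refine le_min ?_ ?_
  · calc ‖∑ i ∈ range M, z ^ i‖ ≤ ∑ i ∈ range M, ‖z ^ i‖ := norm_sum_le _ _
      _ = M := by simp [norm_pow, hnz]
  · -- the 1/sin bound
    set s : ℝ := Real.sin (Real.pi * y / p) with hsdef
    have hyppos : (0:ℝ) < (y:ℝ) / p := by positivity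
    have hspos : 0 < s := by
      apply Real.sin_pos_of_pos_of_lt_pi
      · positivity
      · have : (y:ℝ) / p < 1 := by
          rw [div_lt_one (by positivity)]; exact_mod_cast hy
        calc Real.pi * y / p = Real.pi * ((y:ℝ)/p) := by ring
          _ < Real.pi * 1 := by
            exact mul_lt_mul_of_pos_left this Real.pi_pos
          _ = Real.pi := by ring
    have hslow : 2 * d / p ≤ s := by
      have hcase : s = Real.sin (Real.pi * d / p) := by
        rcases le_or_gt y (p - y) with h | h
        · have : d = y := by omega
          rw [this]
        · have hdy : d = p - y := by omega
          have : Real.pi * d / p = Real.pi - Real.pi * y / p := by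
            rw [hdy]
            have : ((p - y : ℕ) : ℝ) = (p:ℝ) - y := by
              push_cast [Nat.cast_sub hy.le]; ring
            rw [this]
            field_simp
          rw [this, Real.sin_pi_sub]
      rw [hcase]
      have harg1 : (0:ℝ) ≤ Real.pi * d / p := by positivity
      have harg2 : Real.pi * d / p ≤ Real.pi / 2 := by
        rw [div_le_div_iff₀ (by positivity) (by norm_num)]
        have : (2:ℝ) * d ≤ p := by exact_mod_cast hd2
        nlinarith [Real.pi_pos]
      have := Real.mul_le_sin harg1 harg2
      calc (2:ℝ) * d / p = 2 / Real.pi * (Real.pi * d / p) := by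
            field_simp
        _ ≤ Real.sin (Real.pi * d / p) := this
    have hz1 : ‖z - 1‖ = 2 * s := by
      have hθ : z = Complex.exp (((2 * Real.pi * y / p : ℝ) : ℂ) * Complex.I) := by
        rw [hzdef, ep]; congr 1; push_cast; ring
      have hre : (z - 1).re = Real.cos (2 * Real.pi * y / p) - 1 := by
        rw [hθ, Complex.exp_mul_I, ← Complex.ofReal_cos, ← Complex.ofReal_sin]
        simp only [Complex.sub_re, Complex.add_re, Complex.ofReal_re, Complex.mul_re,
          Complex.ofReal_im, Complex.I_re, Complex.I_im, Complex.one_re]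
        ring
      have him : (z - 1).im = Real.sin (2 * Real.pi * y / p) := by
        rw [hθ, Complex.exp_mul_I, ← Complex.ofReal_cos, ← Complex.ofReal_sin]
        simp only [Complex.sub_im, Complex.add_im, Complex.ofReal_im, Complex.mul_im,
          Complex.ofReal_re, Complex.I_re, Complex.I_im, Complex.one_im]
        ring
      have hsq : ‖z - 1‖ ^ 2 = (2 * s) ^ 2 := by
        rw [Complex.sq_norm, Complex.normSq_apply, hre, him]
        have hs2 : s ^ 2 = 1 / 2 - Real.cos (2 * (Real.pi * y / p)) / 2 :=
          Real.sin_sq_eq_half_sub _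
        have hpyth := Real.sin_sq_add_cos_sq (2 * Real.pi * y / p)
        have h2 : (2 : ℝ) * (Real.pi * y / p) = 2 * Real.pi * y / p := by ring
        rw [h2] at hs2
        nlinarith
      have := Real.sqrt_sq (norm_nonneg (z - 1))
      rw [← this, hsq, Real.sqrt_sq (by positivity)]
    have hzne : z ≠ 1 := by
      intro h
      rw [h, sub_self, norm_zero] at hz1
      nlinarith
    have hgeo : ∑ i ∈ range M, z ^ i = (z ^ M - 1) / (z - 1) := geom_sum_eq hzne M
    rw [hgeo, norm_div, hz1]
    have hnum : ‖z ^ M - 1‖ ≤ 2 := by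
      calc ‖z ^ M - 1‖ ≤ ‖z ^ M‖ + ‖(1:ℂ)‖ := norm_sub_le _ _
        _ = 2 := by norm_num [norm_pow, hnz]
    have hd0 : (0:ℝ) < d := by exact_mod_cast hd1
    have hppos : (0:ℝ) < p := by exact_mod_cast hp0
    calc ‖z ^ M - 1‖ / (2 * s) ≤ 2 / (2 * s) := by gcongr
      _ ≤ (p:ℝ) / (2 * d) := by
          rw [div_le_div_iff₀ (by positivity) (by positivity)]
          have : (2:ℝ) * d / p ≤ s := hslow
          rw [div_le_iff₀ hppos] at this
          nlinarith
      _ ≤ (p:ℝ) / d := by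
          apply div_le_div_of_nonneg_left (by positivity) hd0
          linarith

lemma unit_val_mem {p : ℕ} [NeZero p] (hp : p.Prime) (u : (ZMod p)ˣ) :
    (u : ZMod p).val ∈ Finset.Icc 1 (p - 1) := by
  haveI : Fact p.Prime := ⟨hp⟩
  have h1 : (u : ZMod p).val < p := ZMod.val_lt _
  have h0 : (u : ZMod p).val ≠ 0 := by
    intro h
    have : (u : ZMod p) = 0 := by
      have hc : (((u : ZMod p).val : ℕ) : ZMod p) = (u : ZMod p) := by
        rw [ZMod.natCast_val, ZMod.cast_id]
      rw [h] at hc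
      simpa using hc.symm
    exact u.ne_zero this
  simp only [Finset.mem_Icc]
  omega

lemma sum_units_eq {p : ℕ} [NeZero p] (hp : p.Prime) {β : Type*} [AddCommMonoid β] (f : ℕ → β) :
    ∑ u : (ZMod p)ˣ, f ((u : ZMod p)).val = ∑ x ∈ Finset.Icc 1 (p - 1), f x := by
  haveI : Fact p.Prime := ⟨hp⟩
  have hco : ∀ x ∈ Finset.Icc 1 (p - 1), Nat.Coprime x p := by
    intro x hx
    simp only [Finset.mem_Icc] at hx
    have h2 : 2 ≤ p := hp.two_le
    exact ((Nat.Prime.coprime_iff_not_dvd hp).mpr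
      (fun hdvd => by have := Nat.le_of_dvd (by omega) hdvd; omega)).symm
  refine Finset.sum_bij' (i := fun u _ => ((u : ZMod p)).val)
    (j := fun x hx => ZMod.unitOfCoprime x (hco x hx))
    (fun u _ => unit_val_mem hp u)
    (fun x hx => Finset.mem_univ _)
    ?_ ?_ ?_
  · intro u _
    apply Units.ext
    rw [ZMod.coe_unitOfCoprime]
    rw [ZMod.natCast_val, ZMod.cast_id]
  · intro x hx0
    have hx := Finset.mem_Icc.mp hx0
    show (((ZMod.unitOfCoprime x (hco x hx0)) : ZMod p)).val = x
    rw [ZMod.coe_unitOfCoprime]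
    have h2 : 2 ≤ p := hp.two_le
    exact ZMod.val_cast_of_lt (by omega)
  · intro u _
    rfl

lemma pinv_val {p : ℕ} [NeZero p] (u : (ZMod p)ˣ) :
    pinv p ((u : ZMod p)).val = ((u⁻¹ : (ZMod p)ˣ) : ZMod p).val := by
  unfold pinv
  congr 1
  rw [ZMod.natCast_val, ZMod.cast_id]
  exact ZMod.inv_coe_unit u

lemma Kl_unit {p : ℕ} [NeZero p] (hp : p.Prime) (m n : ℤ) :
    Kl p m n = ∑ u : (ZMod p)ˣ,
      ep p (m * ((u : ZMod p)).val + n * (((u⁻¹ : (ZMod p)ˣ) : ZMod p)).val) := by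
  rw [Kl, ← sum_units_eq hp (f := fun x => ep p (m * x + n * (pinv p x : ℤ)))]
  refine Fintype.sum_congr _ _ fun u => ?_
  rw [pinv_val]

lemma Kl_twist {p : ℕ} [NeZero p] (hp : p.Prime) (m : ℤ) (n : ℕ)
    (hn1 : 1 ≤ n) (hn2 : n ≤ p - 1) :
    Kl p (m * n) 1 = ∑ u : (ZMod p)ˣ,
      ep p (m * ((u : ZMod p)).val) *
        ep p ((n : ℤ) * (((u⁻¹ : (ZMod p)ˣ) : ZMod p)).val) := by
  haveI : Fact p.Prime := ⟨hp⟩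
  have hp2 : 2 ≤ p := hp.two_le
  have hpne : p ≠ 0 := hp.pos.ne'
  have hpc : (p:ℂ) ≠ 0 := Nat.cast_ne_zero.mpr hpne
  have hn0 : ((n:ℕ) : ZMod p) ≠ 0 := by
    rw [Ne, ZMod.natCast_eq_zero_iff]
    intro hdvd
    have := Nat.le_of_dvd (by omega) hdvd
    omega
  set c : (ZMod p)ˣ := Units.mk0 ((n:ℕ) : ZMod p) hn0 with hc
  rw [Kl_unit hp]
  rw [← Equiv.sum_comp (Equiv.mulLeft c⁻¹)
    (fun u => ep p (m * n * ((u : ZMod p)).val + 1 * (((u⁻¹ : (ZMod p)ˣ) : ZMod p)).val))]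
  refine Fintype.sum_congr _ _ fun u => ?_
  simp only [Equiv.coe_mulLeft]
  rw [← ep_add hpc]
  apply ep_congr hpne
  push_cast
  simp only [ZMod.natCast_val, ZMod.cast_id, Units.val_mul, mul_inv_rev, inv_inv]
  have hcn : (c : ZMod p) = ((n:ℕ) : ZMod p) := rfl
  have hcinv : ((c⁻¹ : (ZMod p)ˣ) : ZMod p) = ((n:ℕ) : ZMod p)⁻¹ := by
    rw [← ZMod.inv_coe_unit, hcn]
  have hc0 : (c : ZMod p) ≠ 0 := c.ne_zero
  field_simp [hcn, hcinv]
  rw [hcn]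
  ring

theorem bilinear_Kloosterman_completion_bound :
    ∃ C : ℝ, 0 < C ∧
      ∀ p K L M N : ℕ, p.Prime → 1 ≤ K → 1 ≤ L → 1 ≤ M → 1 ≤ N →
        K + M ≤ p - 1 → L + N ≤ p - 1 →
        ‖∑ m ∈ Finset.Icc (K + 1) (K + M), ∑ n ∈ Finset.Icc (L + 1) (L + N),
            Kl p ((m : ℤ) * n) 1‖ ≤
          C * ∑ x ∈ Finset.Icc 1 (p - 1),
            min (M : ℝ) ((p : ℝ) / (dp p x : ℝ)) *
              min (N : ℝ) ((p : ℝ) / (dp p (pinv p x) : ℝ)) := by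
  refine ⟨1, one_pos, ?_⟩
  intro p K L M N hp hK hL hM hN hKM hLN
  haveI : NeZero p := ⟨hp.pos.ne'⟩
  have hp2 : 2 ≤ p := hp.two_le
  rw [one_mul]
  have hstep : ∑ m ∈ Finset.Icc (K+1) (K+M), ∑ n ∈ Finset.Icc (L+1) (L+N), Kl p ((m:ℤ)*n) 1
      = ∑ u : (ZMod p)ˣ,
          (∑ m ∈ Finset.Icc (K+1) (K+M), ep p ((m:ℤ) * ((u:ZMod p)).val)) *
          (∑ n ∈ Finset.Icc (L+1) (L+N), ep p ((n:ℤ) * (((u⁻¹:(ZMod p)ˣ):ZMod p)).val)) := by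
    calc ∑ m ∈ Finset.Icc (K+1) (K+M), ∑ n ∈ Finset.Icc (L+1) (L+N), Kl p ((m:ℤ)*n) 1
        = ∑ m ∈ Finset.Icc (K+1) (K+M), ∑ n ∈ Finset.Icc (L+1) (L+N), ∑ u : (ZMod p)ˣ,
            ep p ((m:ℤ) * ((u:ZMod p)).val) *
              ep p ((n:ℤ) * (((u⁻¹:(ZMod p)ˣ):ZMod p)).val) := by
          refine Finset.sum_congr rfl fun m hm => Finset.sum_congr rfl fun n hn => ?_
          have hn' := Finset.mem_Icc.mp hn
          exact Kl_twist hp (m:ℤ) n (by omega) (by omega)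
      _ = ∑ m ∈ Finset.Icc (K+1) (K+M), ∑ u : (ZMod p)ˣ, ∑ n ∈ Finset.Icc (L+1) (L+N),
            ep p ((m:ℤ) * ((u:ZMod p)).val) *
              ep p ((n:ℤ) * (((u⁻¹:(ZMod p)ˣ):ZMod p)).val) :=
          Finset.sum_congr rfl fun m _ => Finset.sum_comm
      _ = ∑ u : (ZMod p)ˣ, ∑ m ∈ Finset.Icc (K+1) (K+M), ∑ n ∈ Finset.Icc (L+1) (L+N),
            ep p ((m:ℤ) * ((u:ZMod p)).val) *
              ep p ((n:ℤ) * (((u⁻¹:(ZMod p)ˣ):ZMod p)).val) := Finset.sum_comm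
      _ = _ := Finset.sum_congr rfl fun u _ => (Finset.sum_mul_sum _ _ _ _).symm
  rw [hstep]
  have hbound : ∀ u : (ZMod p)ˣ,
      ‖(∑ m ∈ Finset.Icc (K+1) (K+M), ep p ((m:ℤ) * ((u:ZMod p)).val)) *
        (∑ n ∈ Finset.Icc (L+1) (L+N), ep p ((n:ℤ) * (((u⁻¹:(ZMod p)ˣ):ZMod p)).val))‖
      ≤ min (M:ℝ) ((p:ℝ) / (dp p (((u:ZMod p)).val : ℤ) : ℝ)) *
          min (N:ℝ) ((p:ℝ) / (dp p ((((u⁻¹:(ZMod p)ˣ):ZMod p)).val : ℤ) : ℝ)) := by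
    intro u
    have h1 := Finset.mem_Icc.mp (unit_val_mem hp u)
    have h2 := Finset.mem_Icc.mp (unit_val_mem hp u⁻¹)
    rw [norm_mul]
    refine mul_le_mul (geom_bound hp h1.1 h1.2 K M) (geom_bound hp h2.1 h2.2 L N)
      (norm_nonneg _) ?_
    refine le_min (by positivity) (by positivity)
  calc ‖∑ u : (ZMod p)ˣ, _‖ ≤ ∑ u : (ZMod p)ˣ,
        ‖(∑ m ∈ Finset.Icc (K+1) (K+M), ep p ((m:ℤ) * ((u:ZMod p)).val)) *
          (∑ n ∈ Finset.Icc (L+1) (L+N), ep p ((n:ℤ) * (((u⁻¹:(ZMod p)ˣ):ZMod p)).val))‖ :=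
        norm_sum_le _ _
    _ ≤ ∑ u : (ZMod p)ˣ,
          min (M:ℝ) ((p:ℝ) / (dp p (((u:ZMod p)).val : ℤ) : ℝ)) *
            min (N:ℝ) ((p:ℝ) / (dp p ((((u⁻¹:(ZMod p)ˣ):ZMod p)).val : ℤ) : ℝ)) :=
        Finset.sum_le_sum fun u _ => hbound u
    _ = ∑ x ∈ Finset.Icc 1 (p - 1),
          min (M : ℝ) ((p : ℝ) / (dp p x : ℝ)) *
            min (N : ℝ) ((p : ℝ) / (dp p (pinv p x) : ℝ)) := by
        rw [← sum_units_eq hp (f := fun x : ℕ =>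
          min (M : ℝ) ((p : ℝ) / (dp p (x:ℤ) : ℝ)) *
            min (N : ℝ) ((p : ℝ) / (dp p ((pinv p x : ℕ):ℤ) : ℝ)))]
        exact Fintype.sum_congr _ _ fun u => by rw [pinv_val]
end

section
/- For every ε > 0 there exists a constant C > 0 such that for every prime p and all integers M, N with 1 ≤ M, N < p, one has ∑ 1/‖x̄‖_p ≤ C (1/M + N/p) p^ε, where the sum is over all integers x with 1 ≤ x ≤ p-1, ‖x‖_p ≤ p/M and ‖x̄‖_p > p/N. -/
open Real Finset

lemma divisor_bound {δ : ℝ} (hδ : 0 < δ) :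
    ∃ C : ℝ, 0 < C ∧ ∀ n : ℕ, n ≠ 0 → (n.divisors.card : ℝ) ≤ C * (n : ℝ) ^ δ := by
  have hlog2 : 0 < Real.log 2 := Real.log_pos one_lt_two
  set B : ℝ := 1 + 2 / (δ * Real.log 2) with hB
  have hB1 : 1 ≤ B := le_add_of_nonneg_right (by positivity)
  have hB0 : 0 < B := by linarith
  set T : ℕ := ⌈(2:ℝ) ^ (1/δ)⌉₊ with hT
  refine ⟨B ^ (T+1), by positivity, fun n hn => ?_⟩
  -- factor bound per prime
  have key : ∀ q ∈ n.primeFactors,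
      ((n.factorization q + 1 : ℕ) : ℝ) ≤
        (if q ≤ T then B else 1) * ((q : ℝ) ^ (n.factorization q : ℕ)) ^ δ := by
    intro q hq
    have hqp : q.Prime := Nat.prime_of_mem_primeFactors hq
    have hq2 : (2:ℝ) ≤ q := by exact_mod_cast hqp.two_le
    have hq0 : (0:ℝ) ≤ q := by linarith
    set a : ℕ := n.factorization q with ha
    have hcast : ((q:ℝ) ^ a) ^ δ = ((q:ℝ) ^ δ) ^ a := by
      rw [← Real.rpow_natCast (q:ℝ) a, ← Real.rpow_natCast ((q:ℝ)^δ) a,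
        ← Real.rpow_mul hq0, ← Real.rpow_mul hq0, mul_comm]
    by_cases hsmall : q ≤ T
    · simp only [hsmall, if_true]
      -- (a+1) ≤ B * 2^(aδ) ≤ B * (q^a)^δ
      have h2a : ((2:ℝ) ^ δ) ^ a ≤ ((q:ℝ) ^ δ) ^ a := by
        apply pow_le_pow_left₀ (Real.rpow_nonneg (by norm_num) _)
        exact Real.rpow_le_rpow (by norm_num) hq2 hδ.le
      have hexp : ((2:ℝ) ^ δ) ^ a = Real.exp ((a : ℝ) * (δ * Real.log 2)) := by
        rw [← Real.rpow_natCast ((2:ℝ)^δ) a, ← Real.rpow_mul (by norm_num),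
          Real.rpow_def_of_pos (by norm_num)]
        ring_nf
      have hge : (a : ℝ) * (δ * Real.log 2) + 1 ≤ ((2:ℝ) ^ δ) ^ a := by
        rw [hexp]; exact Real.add_one_le_exp _
      have ha0 : (0:ℝ) ≤ a := Nat.cast_nonneg a
      have hBineq : ((a:ℕ) + 1 : ℝ) ≤ B * ((2:ℝ) ^ δ) ^ a := by
        have h1 : B * (((a : ℝ) * (δ * Real.log 2)) + 1) ≤ B * ((2:ℝ) ^ δ) ^ a :=
          mul_le_mul_of_nonneg_left hge hB0.le
        refine le_trans ?_ h1
        have : B * ((a : ℝ) * (δ * Real.log 2)) ≥ 2 * a := by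
          rw [hB]
          have hdl : 0 < δ * Real.log 2 := by positivity
          have : (1 + 2 / (δ * Real.log 2)) * ((a:ℝ) * (δ * Real.log 2))
              = (a:ℝ) * (δ * Real.log 2) + 2 * a := by
            field_simp
          rw [this]
          nlinarith
        nlinarith
      push_cast
      calc ((a:ℝ) + 1) ≤ B * ((2:ℝ) ^ δ) ^ a := by push_cast at hBineq; linarith
        _ ≤ B * ((q:ℝ) ^ δ) ^ a := mul_le_mul_of_nonneg_left h2a hB0.le
        _ = B * ((q:ℝ) ^ a) ^ δ := by rw [hcast]
    · simp only [hsmall, if_false, one_mul]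
      -- q > T so q^δ ≥ 2, then a+1 ≤ 2^a ≤ (q^δ)^a
      have hqT : ((2:ℝ) ^ (1/δ) : ℝ) ≤ q := by
        have h1 : ((2:ℝ) ^ (1/δ)) ≤ T := Nat.le_ceil _
        have h2 : (T : ℝ) ≤ q := by exact_mod_cast (not_le.mp hsmall).le
        linarith
      have h2q : (2:ℝ) ≤ (q:ℝ) ^ δ := by
        have := Real.rpow_le_rpow (Real.rpow_nonneg (by norm_num) _) hqT hδ.le
        rwa [← Real.rpow_mul (by norm_num), one_div, inv_mul_cancel₀ hδ.ne',
          Real.rpow_one] at this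
      have h1 : ((a:ℕ) + 1 : ℝ) ≤ (2:ℝ) ^ a := by
        have := Nat.lt_two_pow_self (n := a)
        push_cast
        exact_mod_cast Nat.succ_le_of_lt this
      push_cast
      calc ((a:ℝ) + 1) ≤ (2:ℝ) ^ a := by push_cast at h1; linarith
        _ ≤ ((q:ℝ) ^ δ) ^ a := pow_le_pow_left₀ (by norm_num) h2q a
        _ = ((q:ℝ) ^ a) ^ δ := hcast.symm
  -- assemble
  have hprod : (n : ℝ) = ∏ q ∈ n.primeFactors, (q:ℝ) ^ (n.factorization q) := by
    push_cast
    norm_cast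
    conv_lhs => rw [← Nat.factorization_prod_pow_eq_self hn]
    rfl
  rw [Nat.card_divisors hn]
  push_cast
  calc (∏ q ∈ n.primeFactors, ((n.factorization q : ℝ) + 1))
      ≤ ∏ q ∈ n.primeFactors,
          (if q ≤ T then B else 1) * ((q : ℝ) ^ (n.factorization q : ℕ)) ^ δ := by
        apply Finset.prod_le_prod
        · intro q hq; positivity
        · intro q hq; have := key q hq; push_cast at this ⊢; exact this
    _ = (∏ q ∈ n.primeFactors, (if q ≤ T then B else 1)) *
          ∏ q ∈ n.primeFactors, ((q : ℝ) ^ (n.factorization q : ℕ)) ^ δ := by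
        rw [Finset.prod_mul_distrib]
    _ ≤ B ^ (T+1) * (n : ℝ) ^ δ := by
        have hre : ∏ q ∈ n.primeFactors, ((q : ℝ) ^ (n.factorization q : ℕ)) ^ δ
            = (n : ℝ) ^ δ := by
          rw [Real.finset_prod_rpow _ _ (fun q _ => by positivity), ← hprod]
        rw [hre]
        apply mul_le_mul
        · calc ∏ q ∈ n.primeFactors, (if q ≤ T then B else 1)
              = ∏ q ∈ n.primeFactors.filter (· ≤ T), B := by
                rw [Finset.prod_filter]
            _ = B ^ (n.primeFactors.filter (· ≤ T)).card := Finset.prod_const B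
            _ ≤ B ^ (T+1) := by
                apply pow_le_pow_right₀ hB1
                have : n.primeFactors.filter (· ≤ T) ⊆ Finset.range (T+1) := by
                  intro q hq
                  simp only [Finset.mem_filter] at hq
                  simp [Nat.lt_succ_iff, hq.2]
                simpa using Finset.card_le_card this
        · exact le_refl _
        · positivity
        · positivity



lemma dp_eq_min {p u : ℕ} (hu : u < p) : dp p (u : ℤ) = min u (p - u) := by
  unfold dp
  have h : ((u : ℤ) % (p : ℤ)) = (u : ℤ) := by
    apply Int.emod_eq_of_lt (by positivity) (by exact_mod_cast hu)
  rw [h, Int.toNat_natCast]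

lemma dp_pos {p u : ℕ} (h1 : 1 ≤ u) (hu : u < p) : 1 ≤ dp p (u : ℤ) := by
  rw [dp_eq_min hu]; omega

lemma dp_le {p u : ℕ} (hu : u < p) : 2 * dp p (u : ℤ) ≤ p := by
  rw [dp_eq_min hu]; omega

lemma dp_mem {p u : ℕ} (h1 : 1 ≤ u) (hu : u < p) :
    u = dp p (u : ℤ) ∨ u = p - dp p (u : ℤ) := by
  rw [dp_eq_min hu]; omega

lemma dp_cast {p u : ℕ} (hu : u < p) :
    ((dp p (u : ℤ) : ℕ) : ZMod p) = (u : ZMod p) ∨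
    ((dp p (u : ℤ) : ℕ) : ZMod p) = -(u : ZMod p) := by
  rw [dp_eq_min hu]
  rcases min_cases u (p - u) with ⟨h, _⟩ | ⟨h, _⟩
  · left; rw [h]
  · right; rw [h, Nat.cast_sub hu.le, ZMod.natCast_self, zero_sub]

lemma key_facts (p M N x : ℕ) (hp : p.Prime) (hNp : N < p)
    (hx1 : 1 ≤ x) (hxp : x < p)
    (h1 : (M * dp p (x : ℤ) : ℝ) ≤ p) (h2 : (p : ℝ) < N * dp p ((pinv p x : ℕ) : ℤ)) :
    ∃ k : ℕ, 1 ≤ k ∧ k ≤ p ∧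
      (dp p (x : ℤ) * dp p ((pinv p x : ℕ) : ℤ) + 1) / p = k ∧
      (dp p (x : ℤ) ∣ k * p - 1 ∨ dp p (x : ℤ) ∣ k * p + 1) ∧
      ((k : ℝ) * M ≤ 2 * dp p ((pinv p x : ℕ) : ℤ)) ∧
      1 ≤ dp p ((pinv p x : ℤ)) := by
  haveI : Fact p.Prime := ⟨hp⟩
  set a := dp p (x : ℤ) with ha
  set y := pinv p x with hy
  set b := dp p ((y : ℕ) : ℤ) with hb
  have hp2 : 2 ≤ p := hp.two_le
  have hx0 : (x : ZMod p) ≠ 0 := by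
    rw [Ne, ZMod.natCast_eq_zero_iff]
    intro hdvd
    exact absurd (Nat.le_of_dvd (by omega) hdvd) (by omega)
  have hyx : ((y : ℕ) : ZMod p) = (x : ZMod p)⁻¹ := by
    rw [hy]; exact ZMod.natCast_rightInverse _
  have hylt : y < p := ZMod.val_lt _
  have hy1 : 1 ≤ y := by
    rcases Nat.eq_zero_or_pos y with h0 | h0
    · exfalso
      have : ((y:ℕ) : ZMod p) = 0 := by rw [h0]; simp
      rw [hyx, inv_eq_zero] at this
      exact hx0 this
    · exact h0
  -- basic dp facts
  have ha1 : 1 ≤ a := dp_pos hx1 hxp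
  have halt : 2 * a ≤ p := dp_le hxp
  have hb1 : 1 ≤ b := dp_pos hy1 hylt
  have hblt : 2 * b ≤ p := dp_le hylt
  have hb2 : 2 ≤ b := by
    by_contra hcon
    have hbeq : b = 1 := by omega
    rw [hbeq] at h2
    have : (p : ℝ) < N := by simpa using h2
    have : (N : ℝ) < p := by exact_mod_cast hNp
    linarith
  have hp4 : 4 ≤ p := by omega
  -- a*b ≡ ±1 mod p
  have hab : ((a * b : ℕ) : ZMod p) = 1 ∨ ((a * b : ℕ) : ZMod p) = -1 := by
    push_cast
    rcases dp_cast hxp with hca | hca <;> rcases dp_cast hylt with hcb | hcb <;>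
      rw [← ha] at hca <;> rw [← hb] at hcb <;>
      rw [hca, hcb, hyx]
    · left; exact mul_inv_cancel₀ hx0
    · right; rw [mul_neg, mul_inv_cancel₀ hx0]
    · right; rw [neg_mul, mul_inv_cancel₀ hx0]
    · left; rw [neg_mul, mul_neg, neg_neg, mul_inv_cancel₀ hx0]
  have hab2 : 2 ≤ a * b := by nlinarith
  have halep : a ≤ p - 1 := by omega
  have hblep : b ≤ p - 1 := by omega
  -- main case analysis
  rcases hab with hcase | hcase
  · -- p ∣ a*b - 1, a*b = k*p + 1
    have hmod : a * b ≡ 1 [MOD p] := (ZMod.natCast_eq_natCast_iff _ _ _).mp (by simpa using hcase)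
    have hdvd : p ∣ a * b - 1 := (Nat.modEq_iff_dvd' (by omega)).mp hmod.symm
    obtain ⟨k, hk⟩ := hdvd
    have habk : a * b = k * p + 1 := by rw [mul_comm k p]; omega
    have hk1 : 1 ≤ k := by
      rcases Nat.eq_zero_or_pos k with rfl | h; · omega
      · exact h
    have hkp : k ≤ p := by
      have hub : a * b ≤ p * p := Nat.mul_le_mul (by omega) (by omega)
      have h2 : k * p ≤ p * p := by omega
      exact Nat.le_of_mul_le_mul_right h2 (by omega)
    refine ⟨k, hk1, hkp, ?_, ?_, ?_, hb1⟩
    · rw [habk]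
      have h22 : k * p + 1 + 1 = p * k + 2 := by ring
      rw [h22, Nat.mul_add_div (by omega : 0 < p), Nat.div_eq_of_lt (by omega)]; omega
    · right; rw [← habk]; exact Dvd.intro b rfl
    · have hkpab : (k : ℝ) * p ≤ (a : ℝ) * b := by
        have : (k * p : ℕ) ≤ a * b := by omega
        exact_mod_cast this
      have hMa : (M : ℝ) * a ≤ p := by exact_mod_cast h1
      have hpb : (0:ℝ) < p := by exact_mod_cast (by omega : 0 < p)
      have hbpos : (0:ℝ) < b := by exact_mod_cast hb1
      have hM0 : (0:ℝ) ≤ M := Nat.cast_nonneg M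
      have key : (p:ℝ) * ((k:ℝ) * M) ≤ (p:ℝ) * (2 * b) := by
        nlinarith [mul_le_mul_of_nonneg_right hkpab hM0,
          mul_le_mul_of_nonneg_right hMa hbpos.le]
      exact le_of_mul_le_mul_left key hpb
  · -- p ∣ a*b + 1, a*b + 1 = k*p
    have hpm1 : ((a * b : ℕ) : ZMod p) = ((p - 1 : ℕ) : ZMod p) := by
      rw [hcase, Nat.cast_sub (by omega), ZMod.natCast_self, zero_sub, Nat.cast_one]
    have hmod : a * b ≡ p - 1 [MOD p] := (ZMod.natCast_eq_natCast_iff _ _ _).mp hpm1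
    have hmod2 : a * b + 1 ≡ 0 [MOD p] := by
      have := hmod.add_right 1
      have hpp : p - 1 + 1 = p := by omega
      rw [hpp] at this
      calc a * b + 1 ≡ p [MOD p] := this
        _ ≡ 0 [MOD p] := (Nat.modEq_zero_iff_dvd).mpr dvd_rfl
    have hdvd : p ∣ a * b + 1 := (Nat.modEq_zero_iff_dvd).mp hmod2
    obtain ⟨k, hk⟩ := hdvd
    have habk : a * b + 1 = k * p := by rw [mul_comm k p]; omega
    have hk1 : 1 ≤ k := by
      rcases Nat.eq_zero_or_pos k with rfl | h; · omega
      · exact h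
    have hkp : k ≤ p := by
      have hub : a * b ≤ (p - 1) * p := Nat.mul_le_mul (by omega) (by omega)
      have hexp : (p - 1) * p + p = p * p := by
        have h3 : p - 1 + 1 = p := by omega
        calc (p - 1) * p + p = (p - 1 + 1) * p := by ring
          _ = p * p := by rw [h3]
      have h2 : k * p ≤ p * p := by omega
      exact Nat.le_of_mul_le_mul_right h2 (by omega)
    refine ⟨k, hk1, hkp, ?_, ?_, ?_, hb1⟩
    · rw [habk, Nat.mul_div_cancel _ (by omega : 0 < p)]
    · left
      have : k * p - 1 = a * b := by omega
      rw [this]; exact Dvd.intro b rfl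
    · have hkpab : (k : ℝ) * p ≤ 2 * ((a : ℝ) * b) := by
        have : (k * p : ℕ) ≤ 2 * (a * b) := by omega
        exact_mod_cast this
      have hMa : (M : ℝ) * a ≤ p := by exact_mod_cast h1
      have hpb : (0:ℝ) < p := by exact_mod_cast (by omega : 0 < p)
      have hbpos : (0:ℝ) < b := by exact_mod_cast hb1
      have hM0 : (0:ℝ) ≤ M := Nat.cast_nonneg M
      have key : (p:ℝ) * ((k:ℝ) * M) ≤ (p:ℝ) * (2 * b) := by
        nlinarith [mul_le_mul_of_nonneg_right hkpab hM0,
          mul_le_mul_of_nonneg_right hMa hbpos.le]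
      exact le_of_mul_le_mul_left key hpb



theorem sum_inverse_dist_bound_S2 :
    ∀ ε : ℝ, 0 < ε → ∃ C : ℝ, 0 < C ∧
      ∀ p M N : ℕ, p.Prime → 1 ≤ M → M < p → 1 ≤ N → N < p →
        ∑ x ∈ (Finset.Icc 1 (p - 1)).filter
            (fun x : ℕ => (M * dp p x : ℝ) ≤ p ∧ (p : ℝ) < N * dp p (pinv p x)),
            (1 : ℝ) / (dp p (pinv p x) : ℝ) ≤
          C * (1 / (M : ℝ) + (N : ℝ) / p) * (p : ℝ) ^ ε := by
  intro ε hε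
  have hδ : 0 < ε / 4 := by linarith
  obtain ⟨C₀, hC₀, hdiv⟩ := divisor_bound hδ
  refine ⟨8 * C₀ * (1 + 4 / ε), by positivity, ?_⟩
  intro p M N hp hM1 hMp hN1 hNp
  haveI : Fact p.Prime := ⟨hp⟩
  have hp2 : 2 ≤ p := hp.two_le
  have hp0 : (0:ℝ) < p := by exact_mod_cast (by omega : 0 < p)
  have hM0 : (0:ℝ) < M := by exact_mod_cast hM1
  set S := (Finset.Icc 1 (p - 1)).filter
      (fun x : ℕ => (M * dp p x : ℝ) ≤ p ∧ (p : ℝ) < N * dp p (pinv p x)) with hS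
  set ψ : ℕ → ℕ := fun x => (dp p (x:ℤ) * dp p ((pinv p x : ℕ) : ℤ) + 1) / p with hψ
  have hfacts : ∀ x ∈ S, ∃ k : ℕ, 1 ≤ k ∧ k ≤ p ∧ ψ x = k ∧
      (dp p (x:ℤ) ∣ k * p - 1 ∨ dp p (x:ℤ) ∣ k * p + 1) ∧
      ((k : ℝ) * M ≤ 2 * dp p ((pinv p x : ℕ) : ℤ)) ∧
      1 ≤ dp p ((pinv p x : ℤ)) := by
    intro x hx
    rw [hS, Finset.mem_filter, Finset.mem_Icc] at hx
    exact key_facts p M N x hp hNp hx.1.1 (by omega) hx.2.1 hx.2.2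
  have hmaps : ∀ x ∈ S, ψ x ∈ Finset.Icc 1 p := by
    intro x hx
    obtain ⟨k, hk1, hkp, hpsik, _⟩ := hfacts x hx
    rw [Finset.mem_Icc, hpsik]; exact ⟨hk1, hkp⟩
  rw [← Finset.sum_fiberwise_of_maps_to hmaps (fun x => (1 : ℝ) / (dp p ((pinv p x : ℕ) : ℤ) : ℝ))]
  -- bound each fiber
  have hDk : ∀ n : ℕ, n ≠ 0 → n ≤ p^3 → (n.divisors.card : ℝ) ≤ C₀ * (p:ℝ) ^ (3 * (ε/4)) := by
    intro n hn hnp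
    refine (hdiv n hn).trans ?_
    apply mul_le_mul_of_nonneg_left ?_ hC₀.le
    have h1 : ((n:ℕ):ℝ) ≤ ((p^3 : ℕ) : ℝ) := by exact_mod_cast hnp
    calc ((n:ℕ):ℝ) ^ (ε/4) ≤ ((p^3 : ℕ) : ℝ) ^ (ε/4) :=
          Real.rpow_le_rpow (Nat.cast_nonneg n) h1 hδ.le
      _ = (p:ℝ) ^ (3 * (ε/4)) := by
          push_cast
          rw [← Real.rpow_natCast (p:ℝ) 3, ← Real.rpow_mul hp0.le]
          norm_num
  have hfiber : ∀ k ∈ Finset.Icc 1 p,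
      ∑ x ∈ S.filter (fun x => ψ x = k), (1 : ℝ) / (dp p ((pinv p x : ℕ) : ℤ) : ℝ) ≤
        (8 * C₀ * (p:ℝ) ^ (3 * (ε/4))) * (1 / ((k:ℝ) * M)) := by
    intro k hk
    rw [Finset.mem_Icc] at hk
    have hk0 : (0:ℝ) < k := by exact_mod_cast hk.1
    -- each term ≤ 2/(k*M)
    have hterm : ∀ x ∈ S.filter (fun x => ψ x = k),
        (1 : ℝ) / (dp p ((pinv p x : ℕ) : ℤ) : ℝ) ≤ 2 / ((k:ℝ) * M) := by
      intro x hx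
      rw [Finset.mem_filter] at hx
      obtain ⟨k', _, _, hpsik, _, hkM, hb1⟩ := hfacts x hx.1
      have hkk : k' = k := by rw [← hpsik, hx.2]
      subst hkk
      have hb0 : (0:ℝ) < (dp p ((pinv p x : ℕ) : ℤ) : ℝ) := by exact_mod_cast hb1
      rw [div_le_div_iff₀ hb0 (by positivity)]
      linarith
    -- card of fiber
    have hcard : ((S.filter (fun x => ψ x = k)).card : ℝ) ≤ 4 * (C₀ * (p:ℝ) ^ (3 * (ε/4))) := by
      have hne1 : k * p - 1 ≠ 0 := by
        have : 2 ≤ k * p := by nlinarith [hk.1, hp2]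
        omega
      have hne2 : k * p + 1 ≠ 0 := by omega
      have hle1 : k * p - 1 ≤ p ^ 3 := by
        have : k * p ≤ p * p := Nat.mul_le_mul_right p hk.2
        have h3 : p * p ≤ p ^ 3 := by
          have : p ^ 3 = p * p * p := by ring
          nlinarith
        omega
      have hle2 : k * p + 1 ≤ p ^ 3 := by
        have h4 : k * p ≤ p * p := Nat.mul_le_mul_right p hk.2
        have h3 : p * p * 2 ≤ p ^ 3 := by nlinarith
        omega
      have hmapsto : ∀ x ∈ S.filter (fun x => ψ x = k),
          (fun x : ℕ => dp p (x : ℤ)) x ∈ (k * p - 1).divisors ∪ (k * p + 1).divisors := by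
        intro x hx
        rw [Finset.mem_filter] at hx
        obtain ⟨k', _, _, hpsik, hdvd, _, _⟩ := hfacts x hx.1
        have hkk : k' = k := by rw [← hpsik, hx.2]
        subst hkk
        rw [Finset.mem_union, Nat.mem_divisors, Nat.mem_divisors]
        rcases hdvd with h | h
        · exact Or.inl ⟨h, hne1⟩
        · exact Or.inr ⟨h, hne2⟩
      have hfib : ∀ d ∈ (k * p - 1).divisors ∪ (k * p + 1).divisors,
          ((S.filter (fun x => ψ x = k)).filter
            (fun x => (fun x : ℕ => dp p (x : ℤ)) x = d)).card ≤ 2 := by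
        intro d _
        have hsub : (S.filter (fun x => ψ x = k)).filter (fun x : ℕ => dp p (x:ℤ) = d) ⊆
            {d, p - d} := by
          intro x hx
          simp only [Finset.mem_filter] at hx
          obtain ⟨⟨hxS, _⟩, hdp⟩ := hx
          rw [hS, Finset.mem_filter, Finset.mem_Icc] at hxS
          have hx1 : 1 ≤ x := hxS.1.1
          have hxp : x < p := by omega
          have := dp_mem hx1 hxp
          rw [hdp] at this
          simp only [Finset.mem_insert, Finset.mem_singleton]
          tauto
        calc ((S.filter (fun x => ψ x = k)).filter (fun x : ℕ => dp p (x:ℤ) = d)).card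
            ≤ ({d, p - d} : Finset ℕ).card := Finset.card_le_card hsub
          _ ≤ 2 := Finset.card_insert_le .. |>.trans (by simp)
      have hcard2 : (S.filter (fun x => ψ x = k)).card ≤
          2 * ((k * p - 1).divisors ∪ (k * p + 1).divisors).card :=
        Finset.card_le_mul_card_image_of_maps_to hmapsto 2 hfib
      calc ((S.filter (fun x => ψ x = k)).card : ℝ)
          ≤ 2 * (((k * p - 1).divisors ∪ (k * p + 1).divisors).card : ℝ) := by
            exact_mod_cast hcard2
        _ ≤ 2 * (((k * p - 1).divisors.card : ℝ) + ((k * p + 1).divisors.card : ℝ)) := by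
            have := Finset.card_union_le (k * p - 1).divisors (k * p + 1).divisors
            have h' : (((k * p - 1).divisors ∪ (k * p + 1).divisors).card : ℝ)
                ≤ ((k * p - 1).divisors.card : ℝ) + ((k * p + 1).divisors.card : ℝ) := by
              exact_mod_cast this
            linarith
        _ ≤ 2 * ((C₀ * (p:ℝ) ^ (3 * (ε/4))) + (C₀ * (p:ℝ) ^ (3 * (ε/4)))) := by
            have d1 := hDk _ hne1 hle1
            have d2 := hDk _ hne2 hle2
            linarith
        _ = 4 * (C₀ * (p:ℝ) ^ (3 * (ε/4))) := by ring
    calc ∑ x ∈ S.filter (fun x => ψ x = k), (1 : ℝ) / (dp p ((pinv p x : ℕ) : ℤ) : ℝ)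
        ≤ ((S.filter (fun x => ψ x = k)).card : ℝ) * (2 / ((k:ℝ) * M)) := by
          have := Finset.sum_le_card_nsmul (S.filter (fun x => ψ x = k)) _
            (2 / ((k:ℝ) * M)) hterm
          simpa [nsmul_eq_mul] using this
      _ ≤ (4 * (C₀ * (p:ℝ) ^ (3 * (ε/4)))) * (2 / ((k:ℝ) * M)) := by
          apply mul_le_mul_of_nonneg_right hcard
          positivity
      _ = (8 * C₀ * (p:ℝ) ^ (3 * (ε/4))) * (1 / ((k:ℝ) * M)) := by ring
  have hsum1 : ∑ k ∈ Finset.Icc 1 p, (8 * C₀ * (p:ℝ) ^ (3 * (ε/4))) * (1 / ((k:ℝ) * M))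
      = (8 * C₀ * (p:ℝ) ^ (3 * (ε/4)) / M) * ∑ k ∈ Finset.Icc 1 p, (1:ℝ) / k := by
    rw [Finset.mul_sum]
    apply Finset.sum_congr rfl
    intro k _
    field_simp
  have hharm : ∑ k ∈ Finset.Icc 1 p, (1:ℝ) / k ≤ 1 + Real.log p := by
    have h1 : ∑ k ∈ Finset.Icc 1 p, (1:ℝ) / k = ((harmonic p : ℚ) : ℝ) := by
      rw [harmonic_eq_sum_Icc]
      push_cast
      simp [one_div]
    rw [h1]
    exact_mod_cast harmonic_le_one_add_log p
  have hlog : 1 + Real.log p ≤ (1 + 4 / ε) * (p:ℝ) ^ (ε/4) := by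
    have h1 : Real.log p ≤ (p:ℝ) ^ (ε/4) / (ε/4) := Real.log_natCast_le_rpow_div p hδ
    have h2 : (1:ℝ) ≤ (p:ℝ) ^ (ε/4) := Real.one_le_rpow (by exact_mod_cast (by omega : 1 ≤ p)) hδ.le
    have h3 : (p:ℝ) ^ (ε/4) / (ε/4) = (4/ε) * (p:ℝ) ^ (ε/4) := by
      field_simp
    rw [h3] at h1
    have h4 : (4/ε) * (p:ℝ) ^ (ε/4) + 1 * (p:ℝ) ^ (ε/4) = (1 + 4/ε) * (p:ℝ) ^ (ε/4) := by ring
    nlinarith [h2, h1]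
  calc ∑ k ∈ Finset.Icc 1 p, ∑ x ∈ S.filter (fun x => ψ x = k),
          (1 : ℝ) / (dp p ((pinv p x : ℕ) : ℤ) : ℝ)
      ≤ ∑ k ∈ Finset.Icc 1 p, (8 * C₀ * (p:ℝ) ^ (3 * (ε/4))) * (1 / ((k:ℝ) * M)) :=
        Finset.sum_le_sum hfiber
    _ = (8 * C₀ * (p:ℝ) ^ (3 * (ε/4)) / M) * ∑ k ∈ Finset.Icc 1 p, (1:ℝ) / k := hsum1
    _ ≤ (8 * C₀ * (p:ℝ) ^ (3 * (ε/4)) / M) * ((1 + 4 / ε) * (p:ℝ) ^ (ε/4)) := by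
        apply mul_le_mul_of_nonneg_left (hharm.trans hlog)
        positivity
    _ = (8 * C₀ * (1 + 4 / ε)) * (1 / (M:ℝ)) * ((p:ℝ) ^ (3 * (ε/4)) * (p:ℝ) ^ (ε/4)) := by
        ring
    _ = (8 * C₀ * (1 + 4 / ε)) * (1 / (M:ℝ)) * (p:ℝ) ^ ε := by
        congr 1
        rw [← Real.rpow_add hp0]
        congr 1
        ring
    _ ≤ (8 * C₀ * (1 + 4 / ε)) * (1 / (M:ℝ) + (N:ℝ) / p) * (p:ℝ) ^ ε := by
        have hC : (0:ℝ) < 8 * C₀ * (1 + 4 / ε) := by positivity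
        have hNp0 : (0:ℝ) ≤ (N:ℝ) / p := by positivity
        have hrp : (0:ℝ) ≤ (p:ℝ) ^ ε := Real.rpow_nonneg hp0.le ε
        have h5 : (8 * C₀ * (1 + 4 / ε)) * (1 / (M:ℝ)) ≤
            (8 * C₀ * (1 + 4 / ε)) * (1 / (M:ℝ) + (N:ℝ) / p) :=
          mul_le_mul_of_nonneg_left (le_add_of_nonneg_right hNp0) hC.le
        exact mul_le_mul_of_nonneg_right h5 hrp
end
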